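/- Let C ⊆ 2^X be a family such that there exist n ∈ ℕ and A ⊆ X with C ⊆ {B Δ A : |B| ≤ n}. Then C is stable: C does not have the order property of any length N > 2n + 2. Conversely (finitary direction of the main theorem): if C is d-maximum on an infinite set X and there exist c_1, c_2 ∈ C with c_1 Δ c_2 infinite such that C contains witnesses making arbitrarily long order sequences, then C is unstable. -/

import Mathlib

open Set
open scoped symmDiff

variable {X : Type*}

/-- The trace of a set system `C` on a set `A`. -/
def Tr (C : Set (Set X)) (A : Set X) : Set (Set X) := (fun c => c ∩ A) '' C

/-- `C` shatters the set `A`. -/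
def Shat (C : Set (Set X)) (A : Set X) : Prop := ∀ t ⊆ A, ∃ c ∈ C, c ∩ A = t

/-- The VC dimension of `C` is at most `d`. -/
def VCLe (C : Set (Set X)) (d : ℕ) : Prop := ∀ A : Finset X, Shat C ↑A → A.card ≤ d

/-- The VC dimension of `C` is exactly `d`. -/
def VCEq (C : Set (Set X)) (d : ℕ) : Prop :=
  VCLe C d ∧ ∃ A : Finset X, A.card = d ∧ Shat C ↑A

/-- The Sauer–Shelah bound `Φ_d(n) = Σ_{i=0}^d C(n,i)`. -/
def Phi (d n : ℕ) : ℕ := ∑ i ∈ Finset.range (d + 1), n.choose i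

/-- `C` is a `d`-maximum class. -/
def IsMaximum (C : Set (Set X)) (d : ℕ) : Prop :=
  VCEq C d ∧ ∀ A : Finset X, (Tr C ↑A).ncard = Phi d A.card

/-- `C` is a `d`-maximal class. -/
def IsMaximal (C : Set (Set X)) (d : ℕ) : Prop :=
  VCEq C d ∧ ∀ c ∉ C, VCEq (insert c C) (d + 1)

/-- `C` has the order property of length `N`. -/
def HasOrderProp (C : Set (Set X)) (N : ℕ) : Prop :=
  ∃ a : Fin N → X, ∃ f : Fin N → Set X, (∀ i, f i ∈ C) ∧ ∀ i j, a i ∈ f j ↔ i < j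

namespace StabAux


open scoped Classical

variable {α : Type*}

/-- finitary shattering -/
def FShat (C : Finset (Finset α)) (B : Finset α) : Prop := ∀ t ⊆ B, ∃ c ∈ C, c ∩ B = t

noncomputable def shfin (C : Finset (Finset α)) (A : Finset α) : Finset (Finset α) :=
  A.powerset.filter (fun B => FShat C B)

lemma mem_shfin {C : Finset (Finset α)} {A B : Finset α} :
    B ∈ shfin C A ↔ B ⊆ A ∧ FShat C B := by
  simp [shfin, Finset.mem_filter, Finset.mem_powerset]

lemma FShat.mono {C C' : Finset (Finset α)} {B : Finset α} (h : C ⊆ C') (hB : FShat C B) :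
    FShat C' B := fun t ht => by
  obtain ⟨c, hc, hct⟩ := hB t ht
  exact ⟨c, h hc, hct⟩

lemma card_split (C : Finset (Finset α)) (y : α) :
    C.card = (C.filter (fun c => y ∉ c)).card
      + ((C.filter (fun c => y ∈ c)).image (fun c => c.erase y)).card := by
  rw [Finset.card_image_of_injOn, add_comm, Finset.card_filter_add_card_filter_not]
  intro c hc c' hc' h
  simp only [Finset.coe_filter, Set.mem_setOf_eq] at hc hc'
  dsimp only at h
  rw [← Finset.insert_erase hc.2, ← Finset.insert_erase hc'.2, h]

lemma key_ineq (C : Finset (Finset α)) (A : Finset α) (y : α) (hy : y ∈ A) :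
    (shfin (C.filter (fun c => y ∉ c)) (A.erase y)).card
      + (shfin ((C.filter (fun c => y ∈ c)).image (fun c => c.erase y)) (A.erase y)).card
      ≤ (shfin C A).card := by
  set C₀ := C.filter (fun c => y ∉ c) with hC₀
  set C₁ := (C.filter (fun c => y ∈ c)).image (fun c => c.erase y) with hC₁
  set A' := A.erase y with hA'
  set S₀ := shfin C₀ A' with hS₀
  set S₁ := shfin C₁ A' with hS₁
  have hS₀sub : S₀ ⊆ shfin C A := by
    intro B hB
    rw [mem_shfin] at hB ⊢
    refine ⟨hB.1.trans (Finset.erase_subset _ _), FShat.mono (Finset.filter_subset _ _) hB.2⟩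
  have hS₁sub : S₁ ⊆ shfin C A := by
    intro B hB
    rw [mem_shfin] at hB ⊢
    have hyB : y ∉ B := fun hyB => (Finset.notMem_erase y A) (hB.1 hyB)
    refine ⟨hB.1.trans (Finset.erase_subset _ _), ?_⟩
    intro t ht
    obtain ⟨c', hc', hct⟩ := hB.2 t ht
    rw [hC₁, Finset.mem_image] at hc'
    obtain ⟨c, hc, rfl⟩ := hc'
    rw [Finset.mem_filter] at hc
    refine ⟨c, hc.1, ?_⟩
    rw [← hct]
    ext x
    simp only [Finset.mem_inter, Finset.mem_erase]
    constructor
    · rintro ⟨hx, hxB⟩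
      exact ⟨⟨fun h => hyB (h ▸ hxB), hx⟩, hxB⟩
    · rintro ⟨⟨_, hx⟩, hxB⟩
      exact ⟨hx, hxB⟩
  have hins : ∀ B ∈ S₀ ∩ S₁, insert y B ∈ shfin C A := by
    intro B hB
    rw [Finset.mem_inter, mem_shfin, mem_shfin] at hB
    obtain ⟨⟨hBA, h0⟩, -, h1⟩ := hB
    have hyB : y ∉ B := fun hyB => (Finset.notMem_erase y A) (hBA hyB)
    rw [mem_shfin]
    refine ⟨Finset.insert_subset hy (hBA.trans (Finset.erase_subset _ _)), ?_⟩
    intro t ht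
    by_cases hyt : y ∈ t
    · obtain ⟨c', hc', hct⟩ := h1 (t.erase y) (by
        intro x hx
        rw [Finset.mem_erase] at hx
        have := ht hx.2
        rw [Finset.mem_insert] at this
        exact this.resolve_left hx.1)
      rw [hC₁, Finset.mem_image] at hc'
      obtain ⟨c, hc, rfl⟩ := hc'
      rw [Finset.mem_filter] at hc
      refine ⟨c, hc.1, ?_⟩
      ext x
      simp only [Finset.mem_inter, Finset.mem_insert]
      constructor
      · rintro ⟨hxc, hx | hx⟩
        · exact hx ▸ hyt
        · have : x ∈ c.erase y ∩ B := by
            rw [Finset.mem_inter, Finset.mem_erase]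
            exact ⟨⟨fun h => hyB (h ▸ hx), hxc⟩, hx⟩
          rw [hct, Finset.mem_erase] at this
          exact this.2
      · intro hxt
        by_cases hxy : x = y
        · exact ⟨hxy ▸ hc.2, Or.inl hxy⟩
        · have hxB : x ∈ c.erase y ∩ B := by
            rw [hct, Finset.mem_erase]
            exact ⟨hxy, hxt⟩
          rw [Finset.mem_inter, Finset.mem_erase] at hxB
          exact ⟨hxB.1.2, Or.inr hxB.2⟩
    · obtain ⟨c, hc, hct⟩ := h0 t (by
        intro x hx
        have := ht hx
        rw [Finset.mem_insert] at this
        exact this.resolve_left (fun h => hyt (h ▸ hx)))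
      rw [hC₀, Finset.mem_filter] at hc
      refine ⟨c, hc.1, ?_⟩
      ext x
      simp only [Finset.mem_inter, Finset.mem_insert]
      constructor
      · rintro ⟨hxc, hx | hx⟩
        · exact absurd (hx ▸ hxc) hc.2
        · rw [← hct]; exact Finset.mem_inter.mpr ⟨hxc, hx⟩
      · intro hxt
        have := Finset.mem_inter.mp (hct ▸ hxt)
        exact ⟨this.1, Or.inr this.2⟩
  -- now count
  have hsub : (S₀ ∪ S₁) ∪ (S₀ ∩ S₁).image (insert y) ⊆ shfin C A := by
    intro B hB
    rw [Finset.mem_union, Finset.mem_union] at hB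
    rcases hB with (h | h) | h
    · exact hS₀sub h
    · exact hS₁sub h
    · rw [Finset.mem_image] at h
      obtain ⟨B', hB', rfl⟩ := h
      exact hins B' hB'
  have hdisj : Disjoint (S₀ ∪ S₁) ((S₀ ∩ S₁).image (insert y)) := by
    rw [Finset.disjoint_left]
    intro B hB hB'
    have hyB : y ∉ B := by
      rw [Finset.mem_union] at hB
      rcases hB with h | h <;>
      · rw [mem_shfin] at h
        exact fun hyB => (Finset.notMem_erase y A) (h.1 hyB)
    rw [Finset.mem_image] at hB'
    obtain ⟨B', _, rfl⟩ := hB'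
    exact hyB (Finset.mem_insert_self y B')
  have hcard_im : ((S₀ ∩ S₁).image (insert y)).card = (S₀ ∩ S₁).card := by
    apply Finset.card_image_of_injOn
    intro B hB B' hB' h
    replace hB := Finset.mem_coe.mp hB
    replace hB' := Finset.mem_coe.mp hB'
    have hyB : y ∉ B := by
      rw [Finset.mem_inter, mem_shfin] at hB
      exact fun hy' => (Finset.notMem_erase y A) (hB.1.1 hy')
    have hyB' : y ∉ B' := by
      rw [Finset.mem_inter, mem_shfin] at hB'
      exact fun hy' => (Finset.notMem_erase y A) (hB'.1.1 hy')
    have := congrArg (fun s => Finset.erase s y) h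
    simpa [Finset.erase_insert hyB, Finset.erase_insert hyB'] using this
  calc S₀.card + S₁.card
      = (S₀ ∪ S₁).card + (S₀ ∩ S₁).card := (Finset.card_union_add_card_inter _ _).symm
    _ = (S₀ ∪ S₁).card + ((S₀ ∩ S₁).image (insert y)).card := by rw [hcard_im]
    _ = ((S₀ ∪ S₁) ∪ (S₀ ∩ S₁).image (insert y)).card := (Finset.card_union_of_disjoint hdisj).symm
    _ ≤ (shfin C A).card := Finset.card_le_card hsub

lemma pajor : ∀ (A : Finset α) (C : Finset (Finset α)), (∀ c ∈ C, c ⊆ A) →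
    C.card ≤ (shfin C A).card := by
  intro A
  induction A using Finset.strongInduction with
  | _ A ih =>
    intro C hsub
    rcases C.eq_empty_or_nonempty with rfl | hne
    · simp
    rcases A.eq_empty_or_nonempty with rfl | ⟨y, hy⟩
    · have hC : C = {∅} := by
        apply Finset.eq_singleton_iff_nonempty_unique_mem.mpr
        exact ⟨hne, fun c hc => Finset.subset_empty.mp (hsub c hc)⟩
      have : ∅ ∈ shfin C (∅ : Finset α) := by
        rw [mem_shfin]
        refine ⟨Finset.Subset.refl _, fun t ht => ?_⟩
        have : t = ∅ := Finset.subset_empty.mp ht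
        subst this
        exact ⟨∅, by simp [hC], by simp⟩
      calc C.card = 1 := by rw [hC]; simp
        _ ≤ (shfin C ∅).card := Finset.card_pos.mpr ⟨∅, this⟩
    · set C₀ := C.filter (fun c => y ∉ c) with hC₀
      set C₁ := (C.filter (fun c => y ∈ c)).image (fun c => c.erase y) with hC₁
      have hA' : A.erase y ⊂ A := Finset.erase_ssubset hy
      have h0 : C₀.card ≤ (shfin C₀ (A.erase y)).card := by
        apply ih _ hA'
        intro c hc
        rw [hC₀, Finset.mem_filter] at hc
        exact Finset.subset_erase.mpr ⟨hsub c hc.1, hc.2⟩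
      have h1 : C₁.card ≤ (shfin C₁ (A.erase y)).card := by
        apply ih _ hA'
        intro c hc
        rw [hC₁, Finset.mem_image] at hc
        obtain ⟨c', hc', rfl⟩ := hc
        rw [Finset.mem_filter] at hc'
        exact Finset.erase_subset_erase _ (hsub c' hc'.1)
      have hkey := key_ineq C A y hy
      have hsp := card_split C y
      rw [← hC₀, ← hC₁] at hkey hsp
      omega

lemma cube_zero {C : Finset (Finset α)} {A : Finset α} {y : α} (hy : y ∈ A)
    (hsub : ∀ c ∈ C, c ⊆ A) (hext : C.card = (shfin C A).card) :
    (C.filter (fun c => y ∉ c)).card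
      = (shfin (C.filter (fun c => y ∉ c)) (A.erase y)).card ∧
    ((C.filter (fun c => y ∈ c)).image (fun c => c.erase y)).card
      = (shfin ((C.filter (fun c => y ∈ c)).image (fun c => c.erase y)) (A.erase y)).card := by
  have h0 : (C.filter (fun c => y ∉ c)).card
      ≤ (shfin (C.filter (fun c => y ∉ c)) (A.erase y)).card := by
    apply pajor
    intro c hc
    rw [Finset.mem_filter] at hc
    exact Finset.subset_erase.mpr ⟨hsub c hc.1, hc.2⟩
  have h1 : ((C.filter (fun c => y ∈ c)).image (fun c => c.erase y)).card
      ≤ (shfin ((C.filter (fun c => y ∈ c)).image (fun c => c.erase y)) (A.erase y)).card := by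
    apply pajor
    intro c hc
    rw [Finset.mem_image] at hc
    obtain ⟨c', hc', rfl⟩ := hc
    rw [Finset.mem_filter] at hc'
    exact Finset.erase_subset_erase _ (hsub c' hc'.1)
  have hkey := key_ineq C A y hy
  have hsp := card_split C y
  omega

lemma symmDiff_inter_eq (c s B : Finset α) : (c ∆ s) ∩ B = (c ∩ B) ∆ (s ∩ B) :=
  inf_symmDiff_distrib_right c s B

lemma FShat_symmDiff {C : Finset (Finset α)} {B : Finset α} (s : Finset α)
    (h : FShat C B) : FShat (C.image (fun c => c ∆ s)) B := by
  intro t ht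
  have hsub : t ∆ (s ∩ B) ⊆ B := by
    intro z hz
    rw [Finset.mem_symmDiff] at hz
    rcases hz with ⟨hz, -⟩ | ⟨hz, -⟩
    · exact ht hz
    · exact (Finset.mem_inter.mp hz).2
  obtain ⟨c, hc, hct⟩ := h (t ∆ (s ∩ B)) hsub
  refine ⟨c ∆ s, Finset.mem_image_of_mem _ hc, ?_⟩
  rw [symmDiff_inter_eq, hct, symmDiff_symmDiff_cancel_right]

lemma image_symmDiff_involutive (C : Finset (Finset α)) (s : Finset α) :
    (C.image (fun c => c ∆ s)).image (fun c => c ∆ s) = C := by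
  rw [Finset.image_image]
  have : ((fun c => c ∆ s) ∘ (fun c => c ∆ s)) = id := by
    funext c
    simp [Function.comp, symmDiff_symmDiff_cancel_right]
  rw [this, Finset.image_id]

lemma shfin_symmDiff (C : Finset (Finset α)) (A s : Finset α) :
    shfin (C.image (fun c => c ∆ s)) A = shfin C A := by
  ext B
  rw [mem_shfin, mem_shfin]
  constructor
  · rintro ⟨hBA, hsh⟩
    refine ⟨hBA, ?_⟩
    have := FShat_symmDiff (C := C.image (fun c => c ∆ s)) (B := B) s hsh
    rwa [image_symmDiff_involutive] at this
  · rintro ⟨hBA, hsh⟩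
    exact ⟨hBA, FShat_symmDiff s hsh⟩

lemma card_image_symmDiff (C : Finset (Finset α)) (s : Finset α) :
    (C.image (fun c => c ∆ s)).card = C.card := by
  apply Finset.card_image_of_injective
  intro a b hab
  dsimp only at hab
  have : a ∆ s ∆ s = b ∆ s ∆ s := by rw [hab]
  rwa [symmDiff_symmDiff_cancel_right, symmDiff_symmDiff_cancel_right] at this

lemma star2 : ∀ (A : Finset α) (C : Finset (Finset α)), (∀ c ∈ C, c ⊆ A) →
    C.card = (shfin C A).card → ∅ ∈ C → ∀ t ∈ C, t ≠ ∅ → ∃ x ∈ t, {x} ∈ C := by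
  intro A
  induction A using Finset.strongInduction with
  | _ A ih =>
    intro C hsub hext h0 t ht htne
    by_cases hta : t = A
    · by_cases hC2 : ∃ c ∈ C, c ≠ ∅ ∧ c ≠ A
      · obtain ⟨c, hc, hcne, hcA⟩ := hC2
        have hcsubA := hsub c hc
        obtain ⟨y, hyA, hyc⟩ :=
          Finset.exists_of_ssubset (ssubset_of_subset_of_ne hcsubA hcA)
        have hcube := (cube_zero hyA hsub hext).1
        have hsub₀ : ∀ c' ∈ C.filter (fun c => y ∉ c), c' ⊆ A.erase y := by
          intro c' hc'
          rw [Finset.mem_filter] at hc'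
          exact Finset.subset_erase.mpr ⟨hsub c' hc'.1, hc'.2⟩
        obtain ⟨x, hxc, hxC⟩ := ih (A.erase y) (Finset.erase_ssubset hyA)
          (C.filter (fun c => y ∉ c)) hsub₀ hcube
          (Finset.mem_filter.mpr ⟨h0, Finset.notMem_empty y⟩)
          c (Finset.mem_filter.mpr ⟨hc, hyc⟩) hcne
        exact ⟨x, hta ▸ hcsubA hxc, (Finset.mem_filter.mp hxC).1⟩
      · push_neg at hC2
        subst hta
        have htpos : 0 < t.card := Finset.card_pos.mpr (Finset.nonempty_iff_ne_empty.mpr htne)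
        by_cases hone : t.card = 1
        · obtain ⟨x, rfl⟩ := Finset.card_eq_one.mp hone
          exact ⟨x, Finset.mem_singleton_self x, ht⟩
        · exfalso
          have h2 : 1 < t.card := by omega
          obtain ⟨x, hx, y, hy, hxy⟩ := Finset.one_lt_card.mp h2
          have hCsub : C ⊆ ({∅, t} : Finset (Finset α)) := by
            intro c hc
            rcases eq_or_ne c ∅ with rfl | hne
            · exact Finset.mem_insert_self _ _
            · rw [hC2 c hc (Finset.nonempty_iff_ne_empty.mpr hne)]
              exact Finset.mem_insert_of_mem (Finset.mem_singleton_self _)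
          have hCcard : C.card ≤ 2 := by
            calc C.card ≤ ({∅, t} : Finset (Finset α)).card := Finset.card_le_card hCsub
              _ ≤ 2 := Finset.card_insert_le _ _ |>.trans (by simp)
          have hshsub : ({∅, {x}, {y}} : Finset (Finset α)) ⊆ shfin C t := by
            intro B hB
            simp only [Finset.mem_insert, Finset.mem_singleton] at hB
            rcases hB with rfl | rfl | rfl
            · rw [mem_shfin]
              refine ⟨Finset.empty_subset _, fun s hs => ?_⟩
              rw [Finset.subset_empty.mp hs]
              exact ⟨∅, h0, by simp⟩
            · rw [mem_shfin]
              refine ⟨Finset.singleton_subset_iff.mpr hx, fun s hs => ?_⟩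
              rcases Finset.subset_singleton_iff.mp hs with rfl | rfl
              · exact ⟨∅, h0, by simp⟩
              · exact ⟨t, ht, by
                  rw [Finset.inter_eq_right.mpr (Finset.singleton_subset_iff.mpr hx)]⟩
            · rw [mem_shfin]
              refine ⟨Finset.singleton_subset_iff.mpr hy, fun s hs => ?_⟩
              rcases Finset.subset_singleton_iff.mp hs with rfl | rfl
              · exact ⟨∅, h0, by simp⟩
              · exact ⟨t, ht, by
                  rw [Finset.inter_eq_right.mpr (Finset.singleton_subset_iff.mpr hy)]⟩
          have h3 : ({∅, {x}, {y}} : Finset (Finset α)).card = 3 := by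
            have e1 : (∅ : Finset α) ≠ {x} := (Finset.singleton_ne_empty x).symm
            have e2 : (∅ : Finset α) ≠ {y} := (Finset.singleton_ne_empty y).symm
            have e3 : ({x} : Finset α) ≠ {y} := by
              simp only [Ne, Finset.singleton_inj]
              exact hxy
            rw [Finset.card_insert_of_notMem (by simp [e1, e2]),
              Finset.card_insert_of_notMem (by simp [e3]), Finset.card_singleton]
          have := Finset.card_le_card hshsub
          omega
    · have htA : t ⊆ A := hsub t ht
      obtain ⟨y, hyA, hyt⟩ := Finset.exists_of_ssubset (ssubset_of_subset_of_ne htA hta)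
      have hcube := (cube_zero hyA hsub hext).1
      have hsub₀ : ∀ c' ∈ C.filter (fun c => y ∉ c), c' ⊆ A.erase y := by
        intro c' hc'
        rw [Finset.mem_filter] at hc'
        exact Finset.subset_erase.mpr ⟨hsub c' hc'.1, hc'.2⟩
      obtain ⟨x, hxt, hxC⟩ := ih (A.erase y) (Finset.erase_ssubset hyA)
        (C.filter (fun c => y ∉ c)) hsub₀ hcube
        (Finset.mem_filter.mpr ⟨h0, Finset.notMem_empty y⟩)
        t (Finset.mem_filter.mpr ⟨ht, hyt⟩) htne
      exact ⟨x, hxt, (Finset.mem_filter.mp hxC).1⟩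

lemma chain_lemma [Nonempty α] : ∀ (k : ℕ) (A : Finset α) (C : Finset (Finset α)) (t : Finset α),
    (∀ c ∈ C, c ⊆ A) → C.card = (shfin C A).card → ∅ ∈ C → t ∈ C → t.card = k →
    ∃ (a : ℕ → α) (u : ℕ → Finset α), (∀ j ≤ k, u j ∈ C) ∧ (∀ j ≤ k, u j ⊆ t) ∧
      (∀ i < k, a i ∈ t) ∧ (∀ i < k, ∀ j ≤ k, (a i ∈ u j ↔ i < j)) ∧ u k = t := by
  intro k
  induction k with
  | zero =>
    intro A C t hsub hext h0 ht hcard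
    have : t = ∅ := Finset.card_eq_zero.mp hcard
    subst this
    exact ⟨fun _ => Classical.arbitrary α, fun _ => ∅,
      fun j _ => h0, fun j _ => Finset.Subset.refl _,
      fun i hi => absurd hi (by omega), fun i hi => absurd hi (by omega), rfl⟩
  | succ k ih =>
    intro A C t hsub hext h0 ht hcard
    have htne : t ≠ ∅ := by
      intro h; rw [h] at hcard; simp at hcard
    obtain ⟨x, hxt, hxC⟩ := star2 A C hsub hext h0 t ht htne
    have hxA : x ∈ A := hsub t ht hxt
    set C' := C.image (fun c => c ∆ ({x} : Finset α)) with hC'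
    have hsub' : ∀ c' ∈ C', c' ⊆ A := by
      intro c' hc'
      rw [hC', Finset.mem_image] at hc'
      obtain ⟨c, hc, rfl⟩ := hc'
      intro z hz
      rw [Finset.mem_symmDiff] at hz
      rcases hz with ⟨hz, -⟩ | ⟨hz, -⟩
      · exact hsub c hc hz
      · rw [Finset.mem_singleton] at hz
        exact hz ▸ hxA
    have hext' : C'.card = (shfin C' A).card := by
      rw [hC', card_image_symmDiff, shfin_symmDiff]
      exact hext
    have h0' : ∅ ∈ C' := by
      rw [hC', Finset.mem_image]
      exact ⟨{x}, hxC, symmDiff_self _⟩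
    have htx : t ∆ ({x} : Finset α) = t.erase x := by
      ext z
      rw [Finset.mem_symmDiff, Finset.mem_erase, Finset.mem_singleton]
      constructor
      · rintro (⟨hz, hz'⟩ | ⟨rfl, hz'⟩)
        · exact ⟨hz', hz⟩
        · exact absurd hxt hz'
      · rintro ⟨hz, hz'⟩
        exact Or.inl ⟨hz', hz⟩
    have ht' : t.erase x ∈ C' := by
      rw [hC', Finset.mem_image]
      exact ⟨t, ht, htx⟩
    have hcard' : (t.erase x).card = k := by
      rw [Finset.card_erase_of_mem hxt, hcard]
      omega
    obtain ⟨a', u', hu'C, hu't, ha't, hiff', hu'top⟩ :=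
      ih A C' (t.erase x) hsub' hext' h0' ht' hcard'
    have hback : ∀ c' ∈ C', c' ∆ ({x} : Finset α) ∈ C := by
      intro c' hc'
      rw [hC', Finset.mem_image] at hc'
      obtain ⟨c, hc, rfl⟩ := hc'
      rwa [symmDiff_symmDiff_cancel_right]
    refine ⟨fun i => if i = 0 then x else a' (i - 1),
      fun j => if j = 0 then ∅ else (u' (j - 1)) ∆ ({x} : Finset α), ?_, ?_, ?_, ?_, ?_⟩
    · intro j hj
      by_cases hj0 : j = 0
      · simp only [hj0, if_pos rfl]; exact h0
      · simp only [if_neg hj0]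
        exact hback _ (hu'C (j - 1) (by omega))
    · intro j hj
      by_cases hj0 : j = 0
      · simp only [hj0, if_pos rfl]; exact Finset.empty_subset _
      · simp only [if_neg hj0]
        intro z hz
        rw [Finset.mem_symmDiff] at hz
        rcases hz with ⟨hz, -⟩ | ⟨hz, -⟩
        · exact Finset.erase_subset _ _ (hu't (j - 1) (by omega) hz)
        · rw [Finset.mem_singleton] at hz
          exact hz ▸ hxt
    · intro i hi
      by_cases hi0 : i = 0
      · simp only [hi0, if_pos rfl]; exact hxt
      · simp only [if_neg hi0]
        exact Finset.erase_subset _ _ (ha't (i - 1) (by omega))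
    · intro i hi j hj
      by_cases hi0 : i = 0
      · subst hi0
        simp only [if_pos rfl]
        by_cases hj0 : j = 0
        · subst hj0
          simp
        · simp only [if_neg hj0]
          have hxu : x ∉ u' (j - 1) := fun h =>
            (Finset.notMem_erase x t) (hu't (j - 1) (by omega) h)
          rw [Finset.mem_symmDiff]
          constructor
          · intro _; omega
          · intro _
            exact Or.inr ⟨Finset.mem_singleton_self x, hxu⟩
      · simp only [if_neg hi0]
        by_cases hj0 : j = 0
        · subst hj0
          simp only [if_pos rfl]
          constructor
          · intro h; exact absurd h (Finset.notMem_empty _)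
          · intro h; omega
        · simp only [if_neg hj0]
          have hane : a' (i - 1) ≠ x := by
            have := ha't (i - 1) (by omega)
            rw [Finset.mem_erase] at this
            exact this.1
          rw [Finset.mem_symmDiff]
          have hiff := hiff' (i - 1) (by omega) (j - 1) (by omega)
          constructor
          · rintro (⟨hz, -⟩ | ⟨hz, -⟩)
            · have := hiff.mp hz; omega
            · rw [Finset.mem_singleton] at hz
              exact absurd hz hane
          · intro hij
            exact Or.inl ⟨hiff.mpr (by omega), by
              rw [Finset.mem_singleton]; exact hane⟩
    · have hne : k + 1 ≠ 0 := Nat.succ_ne_zero k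
      simp only [if_neg hne]
      have h1 : u' (k + 1 - 1) = t.erase x := by simpa using hu'top
      rw [h1, ← htx, symmDiff_symmDiff_cancel_right]

lemma phi_eq_pow {d k : ℕ} (h : k ≤ d) : Phi d k = 2 ^ k := by
  have hsub : Finset.range (k + 1) ⊆ Finset.range (d + 1) := by
    intro i hi
    rw [Finset.mem_range] at hi ⊢
    omega
  have := Finset.sum_subset hsub (f := fun i => k.choose i) (fun i hi hni => by
    rw [Finset.mem_range] at hi
    rw [Finset.mem_range] at hni
    exact Nat.choose_eq_zero_of_lt (by omega))
  show ∑ i ∈ Finset.range (d + 1), k.choose i = 2 ^ k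
  rw [← this, Nat.sum_range_choose]

lemma phi_lt_pow {d k : ℕ} (h : d < k) : Phi d k < 2 ^ k := by
  have hsub : Finset.range (d + 1) ⊆ Finset.range (k + 1) := by
    intro i hi
    rw [Finset.mem_range] at hi ⊢
    omega
  show ∑ i ∈ Finset.range (d + 1), k.choose i < 2 ^ k
  rw [← Nat.sum_range_choose]
  apply Finset.sum_lt_sum_of_subset hsub (i := k)
  · rw [Finset.mem_range]; omega
  · rw [Finset.mem_range]; omega
  · exact Nat.choose_pos (le_refl k) |>.trans_le (le_refl _)
  · intro j _ _
    exact Nat.zero_le _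

lemma card_small_subsets (A : Finset α) (d : ℕ) :
    (A.powerset.filter (fun B => B.card ≤ d)).card = Phi d A.card := by
  have heq : A.powerset.filter (fun B => B.card ≤ d)
      = (Finset.range (d + 1)).biUnion (fun i => A.powersetCard i) := by
    ext B
    simp only [Finset.mem_filter, Finset.mem_powerset, Finset.mem_biUnion, Finset.mem_range,
      Finset.mem_powersetCard]
    constructor
    · rintro ⟨hBA, hBd⟩
      exact ⟨B.card, by omega, hBA, rfl⟩
    · rintro ⟨i, hi, hBA, rfl⟩
      exact ⟨hBA, by omega⟩
  rw [heq, Finset.card_biUnion]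
  · show _ = Phi d A.card
    unfold Phi
    apply Finset.sum_congr rfl
    intro i _
    exact Finset.card_powersetCard i A
  · intro i _ j _ hij
    simp only [Function.onFun]
    rw [Finset.disjoint_left]
    intro B hBi hBj
    rw [Finset.mem_powersetCard] at hBi hBj
    exact hij (hBi.2 ▸ hBj.2)

noncomputable def Dfin (C : Set (Set X)) (B : Finset X) : Finset (Finset X) :=
  B.powerset.filter (fun b => ∃ c ∈ C, c ∩ ↑B = ↑b)

lemma mem_Dfin {C : Set (Set X)} {B b : Finset X} :
    b ∈ Dfin C B ↔ b ⊆ B ∧ ∃ c ∈ C, c ∩ ↑B = ↑b := by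
  simp [Dfin, Finset.mem_filter, Finset.mem_powerset]

lemma inter_coe_eq (c : Set X) (B : Finset X) :
    c ∩ ↑B = ↑(B.filter (fun x => x ∈ c)) := by
  ext x
  simp only [Set.mem_inter_iff, Finset.coe_filter, Set.mem_setOf_eq, Finset.mem_coe]
  tauto

lemma Dfin_card {C : Set (Set X)} {d : ℕ} (hmax : IsMaximum C d) (B : Finset X) :
    (Dfin C B).card = Phi d B.card := by
  have h1 : Tr C ↑B = (fun (b : Finset X) => (↑b : Set X)) '' ↑(Dfin C B) := by
    ext s
    constructor
    · rintro ⟨c, hc, rfl⟩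
      refine ⟨B.filter (fun x => x ∈ c), ?_, (inter_coe_eq c B).symm⟩
      rw [Finset.mem_coe, mem_Dfin]
      exact ⟨Finset.filter_subset _ _, c, hc, inter_coe_eq c B⟩
    · rintro ⟨b, hb, rfl⟩
      rw [Finset.mem_coe, mem_Dfin] at hb
      obtain ⟨-, c, hc, hcb⟩ := hb
      exact ⟨c, hc, hcb⟩
  have h2 := hmax.2 B
  rw [h1, Set.ncard_image_of_injective _ Finset.coe_injective, Set.ncard_coe_finset] at h2
  exact h2

lemma part2 {C : Set (Set X)} {d : ℕ} (hX : Infinite X) (hmax : IsMaximum C d)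
    (hcc : ∃ c₁ ∈ C, ∃ c₂ ∈ C, (c₁ ∆ c₂).Infinite) (N : ℕ) : HasOrderProp C N := by
  obtain ⟨c₁, hc₁, c₂, hc₂, hinfd⟩ := hcc
  have hsplit : ∃ s₁ ∈ C, ∃ s₂ ∈ C, (s₂ \ s₁).Infinite := by
    by_cases h : (c₂ \ c₁).Infinite
    · exact ⟨c₁, hc₁, c₂, hc₂, h⟩
    · refine ⟨c₂, hc₂, c₁, hc₁, ?_⟩
      rw [Set.not_infinite] at h
      intro hfin
      exact hinfd (by
        rw [Set.symmDiff_def]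
        exact Set.Finite.union hfin h)
  obtain ⟨s₁, hs₁, s₂, hs₂, hdiff⟩ := hsplit
  obtain ⟨Aset, hAsub, hAfin, hAcard⟩ := hdiff.exists_subset_ncard_eq N
  set A : Finset X := hAfin.toFinset with hA
  have hAco : (↑A : Set X) = Aset := by rw [hA, Set.Finite.coe_toFinset]
  have hAcard' : A.card = N := by
    rw [hA, ← Set.ncard_eq_toFinset_card _ hAfin, hAcard]
  have hsub : ∀ b ∈ Dfin C A, b ⊆ A := fun b hb => (mem_Dfin.mp hb).1
  have hsubA : (↑A : Set X) ⊆ s₂ \ s₁ := hAco ▸ hAsub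
  have h0 : ∅ ∈ Dfin C A := by
    rw [mem_Dfin]
    refine ⟨Finset.empty_subset _, s₁, hs₁, ?_⟩
    ext x
    simp only [Set.mem_inter_iff, Finset.coe_empty, Set.mem_empty_iff_false, iff_false,
      Finset.mem_coe]
    rintro ⟨hx1, hx2⟩
    exact (hsubA hx2).2 hx1
  have hAmem : A ∈ Dfin C A := by
    rw [mem_Dfin]
    refine ⟨Finset.Subset.refl _, s₂, hs₂, ?_⟩
    apply Set.inter_eq_right.mpr
    exact fun x hx => (hsubA hx).1
  have hDtr : ∀ (B : Finset X), B ⊆ A → ∀ t : Finset X, t ⊆ B →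
      ((∃ c ∈ Dfin C A, c ∩ B = t) ↔ t ∈ Dfin C B) := by
    intro B hBA t htB
    constructor
    · rintro ⟨c, hc, rfl⟩
      rw [mem_Dfin] at hc
      obtain ⟨hcA, ct, hct, hctc⟩ := hc
      rw [mem_Dfin]
      refine ⟨Finset.inter_subset_right, ct, hct, ?_⟩
      have hAB : (↑A : Set X) ∩ ↑B = ↑B := Set.inter_eq_right.mpr (fun x hx => hBA hx)
      have : ct ∩ ↑B = (ct ∩ ↑A) ∩ ↑B := by
        rw [Set.inter_assoc, hAB]
      rw [this, hctc, Finset.coe_inter]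
    · intro ht
      rw [mem_Dfin] at ht
      obtain ⟨-, ct, hct, hctt⟩ := ht
      refine ⟨A.filter (fun x => x ∈ ct), ?_, ?_⟩
      · rw [mem_Dfin]
        exact ⟨Finset.filter_subset _ _, ct, hct, inter_coe_eq ct A⟩
      · ext x
        simp only [Finset.mem_inter, Finset.mem_filter]
        constructor
        · rintro ⟨⟨hxA, hxct⟩, hxB⟩
          have : x ∈ ct ∩ ↑B := ⟨hxct, hxB⟩
          rw [hctt] at this
          exact this
        · intro hxt
          have hxB : x ∈ B := htB hxt
          have : x ∈ ct ∩ ↑B := by rw [hctt]; exact hxt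
          exact ⟨⟨hBA hxB, this.1⟩, hxB⟩
  have hshfin : shfin (Dfin C A) A = A.powerset.filter (fun B => B.card ≤ d) := by
    ext B
    rw [mem_shfin, Finset.mem_filter, Finset.mem_powerset]
    constructor
    · rintro ⟨hBA, hsh⟩
      refine ⟨hBA, ?_⟩
      by_contra hd
      push_neg at hd
      have hpow : B.powerset ⊆ Dfin C B := by
        intro t ht
        rw [Finset.mem_powerset] at ht
        obtain ⟨c, hc, hct⟩ := hsh t ht
        exact (hDtr B hBA t ht).mp ⟨c, hc, hct⟩
      have hcard1 : 2 ^ B.card ≤ (Dfin C B).card := by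
        rw [← Finset.card_powerset]
        exact Finset.card_le_card hpow
      rw [Dfin_card hmax] at hcard1
      exact absurd hcard1 (not_le.mpr (phi_lt_pow hd))
    · rintro ⟨hBA, hd⟩
      refine ⟨hBA, ?_⟩
      have hDsub : Dfin C B ⊆ B.powerset := fun t ht => by
        rw [Finset.mem_powerset]; exact (mem_Dfin.mp ht).1
      have hcard1 : B.powerset.card ≤ (Dfin C B).card := by
        rw [Finset.card_powerset, Dfin_card hmax, phi_eq_pow hd]
      have hDeq : Dfin C B = B.powerset := Finset.eq_of_subset_of_card_le hDsub hcard1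
      intro t ht
      apply (hDtr B hBA t ht).mpr
      rw [hDeq, Finset.mem_powerset]
      exact ht
  have hext : (Dfin C A).card = (shfin (Dfin C A) A).card := by
    rw [hshfin, card_small_subsets, Dfin_card hmax]
  have : Nonempty X := inferInstance
  obtain ⟨a, u, huC, hut, hat, hiff, -⟩ :=
    chain_lemma N A (Dfin C A) A hsub hext h0 hAmem hAcard'
  have hch : ∀ j : Fin N, ∃ c ∈ C, c ∩ ↑A = ↑(u j.val) := by
    intro j
    exact (mem_Dfin.mp (huC j.val (le_of_lt j.isLt))).2
  refine ⟨fun i => a i.val, fun j => (hch j).choose, fun j => (hch j).choose_spec.1, ?_⟩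
  intro i j
  have hspec := (hch j).choose_spec.2
  have hai : a i.val ∈ A := hat i.val i.isLt
  rw [Fin.lt_def, ← hiff i.val i.isLt j.val (le_of_lt j.isLt)]
  constructor
  · intro h
    have : (a i.val : X) ∈ (hch j).choose ∩ ↑A := ⟨h, hai⟩
    rw [hspec] at this
    exact this
  · intro h
    have : (a i.val : X) ∈ ((hch j).choose ∩ ↑A) := by
      rw [hspec]; exact h
    exact this.1

lemma part1 {C : Set (Set X)} {n : ℕ} {A : Set X}
    (hsub : C ⊆ (fun B => B ∆ A) '' {B : Set X | B.Finite ∧ B.ncard ≤ n})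
    {N : ℕ} (hN : 2 * n + 2 < N) : ¬ HasOrderProp C N := by
  rintro ⟨a, f, hfC, hiff⟩
  have hinj : Function.Injective a := by
    intro i j hij
    by_contra hne
    rcases lt_or_gt_of_ne hne with h | h
    · have h1 := (hiff i j).mpr h
      rw [hij] at h1
      exact absurd ((hiff j j).mp h1) (lt_irrefl j)
    · have h1 := (hiff j i).mpr h
      rw [← hij] at h1
      exact absurd ((hiff i i).mp h1) (lt_irrefl i)
  have hN3 : 3 ≤ N := by omega
  set i0 : Fin N := ⟨0, by omega⟩ with hi0
  set iL : Fin N := ⟨N - 1, by omega⟩ with hiL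
  obtain ⟨B₁, hB₁, hfB₁⟩ := hsub (hfC i0)
  obtain ⟨B₂, hB₂, hfB₂⟩ := hsub (hfC iL)
  have key : ∀ i : Fin N, i.val < N - 1 → a i ∈ B₂ ∆ B₁ := by
    intro i hi
    have hmem : a i ∈ f iL := (hiff i iL).mpr (by rw [Fin.lt_def, hiL]; exact hi)
    have hnot : a i ∉ f i0 := by
      intro h
      have h2 := (hiff i i0).mp h
      rw [Fin.lt_def] at h2
      exact Nat.not_lt_zero _ h2
    rw [← hfB₂] at hmem
    rw [← hfB₁] at hnot
    dsimp only at hmem hnot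
    rw [Set.mem_symmDiff] at hmem hnot ⊢
    push_neg at hnot
    tauto
  set g : Fin (N - 1) → X := fun i => a ⟨i.val, by omega⟩ with hg
  have hginj : Function.Injective g := by
    intro i j h
    rw [hg] at h
    have := hinj h
    rw [Fin.mk.injEq] at this
    exact Fin.ext this
  set T : Finset X := Finset.univ.image g with hT
  have hTcard : T.card = N - 1 := by
    rw [hT, Finset.card_image_of_injective _ hginj, Finset.card_univ, Fintype.card_fin]
  have hTsub : (↑T : Set X) ⊆ B₂ ∆ B₁ := by
    intro x hx
    rw [hT] at hx
    simp only [Finset.coe_image, Finset.coe_univ, Set.image_univ, Set.mem_range] at hx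
    obtain ⟨i, rfl⟩ := hx
    exact key _ i.isLt
  have hfin : (B₂ ∆ B₁).Finite := (hB₂.1.union hB₁.1).subset Set.symmDiff_subset_union
  have hle : (N - 1 : ℕ) ≤ 2 * n := by
    calc (N - 1 : ℕ) = T.card := hTcard.symm
      _ = (↑T : Set X).ncard := (Set.ncard_coe_finset T).symm
      _ ≤ (B₂ ∆ B₁).ncard := Set.ncard_le_ncard hTsub hfin
      _ ≤ (B₂ ∪ B₁).ncard := Set.ncard_le_ncard Set.symmDiff_subset_union (hB₂.1.union hB₁.1)
      _ ≤ B₂.ncard + B₁.ncard := Set.ncard_union_le _ _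
      _ ≤ 2 * n := by
          have := hB₁.2
          have := hB₂.2
          omega
  omega

end StabAux

/-- A subfamily of `[X]^{≤n} Δ A` is stable; conversely, a `d`-maximum family on
an infinite set containing two sets with infinite symmetric difference is
unstable. -/
theorem stable_iff_subfamily_of_smallSets_symmDiff :
    (∀ (C : Set (Set X)) (n : ℕ) (A : Set X),
      C ⊆ (fun B => B ∆ A) '' {B : Set X | B.Finite ∧ B.ncard ≤ n} →
      ∀ N : ℕ, 2 * n + 2 < N → ¬ HasOrderProp C N) ∧
    (∀ (C : Set (Set X)) (d : ℕ), Infinite X → IsMaximum C d →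
      (∃ c₁ ∈ C, ∃ c₂ ∈ C, (c₁ ∆ c₂).Infinite) →
      ∀ N : ℕ, HasOrderProp C N) := by
  constructor
  · intro C n A h N hN
    exact StabAux.part1 h hN
  · intro C d hX hmax hcc N
    exact StabAux.part2 hX hmax hcc N
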